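/- Let n ≥ 3 and let f = (f_0, …, f_n) be a non-degenerate symmetric signature of arity n. Then f ∈ 𝒜₃ if and only if there exist a matrix H ∈ O₂(ℂ) with det H = −1, a nonzero c ∈ ℂ, and r ∈ {0,1,2,3} such that f = c·((H(1,α))^{⊗n} + i^r·(H(1,−α))^{⊗n}). -/
import Mathlib


/-- `α = (1 + i)/√2`, a primitive 8th root of unity with `α² = i`. -/
noncomputable def alpha : ℂ := (1 + Complex.I) / (Real.sqrt 2 : ℂ)

/-- `f ∈ 𝒜₃`: there exist `H ∈ O₂(ℂ)`, a nonzero `c ∈ ℂ`, and `r ∈ {0,1,2,3}` such that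
`f = c ((H(1,α))^{⊗n} + i^r (H(1,-α))^{⊗n})`. -/
def MemA3 (n : ℕ) (f : ℕ → ℂ) : Prop :=
  ∃ (H : Matrix (Fin 2) (Fin 2) ℂ) (c : ℂ) (r : ℕ),
    H.transpose * H = 1 ∧ c ≠ 0 ∧ r ≤ 3 ∧
    ∀ k ≤ n, f k =
      c * (H.mulVec ![1, alpha] 0 ^ (n - k) * H.mulVec ![1, alpha] 1 ^ k +
        Complex.I ^ r *
          (H.mulVec ![1, -alpha] 0 ^ (n - k) * H.mulVec ![1, -alpha] 1 ^ k))

/-- For a non-degenerate symmetric signature `f` of arity `n ≥ 3`, `f ∈ 𝒜₃` iff the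
defining transformation may be chosen in `O₂(ℂ) − SO₂(ℂ)`, i.e. with determinant `−1`. -/
theorem stmt_12 (n : ℕ) (hn : 3 ≤ n) (f : ℕ → ℂ)
    (hnd : ¬ ∃ a b : ℂ, ∀ k ≤ n, f k = a ^ (n - k) * b ^ k) :
    MemA3 n f ↔
      ∃ (H : Matrix (Fin 2) (Fin 2) ℂ) (c : ℂ) (r : ℕ),
        H.transpose * H = 1 ∧ H.det = -1 ∧ c ≠ 0 ∧ r ≤ 3 ∧
        ∀ k ≤ n, f k =
          c * (H.mulVec ![1, alpha] 0 ^ (n - k) * H.mulVec ![1, alpha] 1 ^ k +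
            Complex.I ^ r *
              (H.mulVec ![1, -alpha] 0 ^ (n - k) * H.mulVec ![1, -alpha] 1 ^ k)) := by
  constructor
  · rintro ⟨H, c, r, hH, hc, hr, hf⟩
    have hdet2 : H.det ^ 2 = 1 := by
      have h := congrArg Matrix.det hH
      rw [Matrix.det_mul, Matrix.det_transpose, Matrix.det_one] at h
      rw [sq]; exact h
    have hdet : H.det = 1 ∨ H.det = -1 := by
      have h : (H.det - 1) * (H.det + 1) = 0 := by linear_combination hdet2
      rcases mul_eq_zero.mp h with h | h
      · left; exact sub_eq_zero.mp h
      · right; exact eq_neg_of_add_eq_zero_left h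
    rcases hdet with hdet | hdet
    · -- det = 1 : multiply on the right by diag(1, -1)
      set D : Matrix (Fin 2) (Fin 2) ℂ := !![1, 0; 0, -1] with hD
      have hDD : D.transpose * D = 1 := by
        rw [hD]
        rw [show (!![1, 0; 0, -1] : Matrix (Fin 2) (Fin 2) ℂ).transpose = !![1, 0; 0, -1] from by
          ext i j; fin_cases i <;> fin_cases j <;> simp]
        ext i j; fin_cases i <;> fin_cases j <;>
          simp [Matrix.mul_apply, Fin.sum_univ_two, Matrix.one_apply]
      have hDdet : D.det = -1 := by rw [hD]; simp [Matrix.det_fin_two_of]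
      have hD1 : D.mulVec ![1, alpha] = ![1, -alpha] := by
        funext i; fin_cases i <;>
          simp [hD, Matrix.mulVec, dotProduct, Fin.sum_univ_two]
      have hD2 : D.mulVec ![1, -alpha] = ![1, alpha] := by
        funext i; fin_cases i <;>
          simp [hD, Matrix.mulVec, dotProduct, Fin.sum_univ_two]
      have hu : (H * D).mulVec ![1, alpha] = H.mulVec ![1, -alpha] := by
        rw [← Matrix.mulVec_mulVec, hD1]
      have hv : (H * D).mulVec ![1, -alpha] = H.mulVec ![1, alpha] := by
        rw [← Matrix.mulVec_mulVec, hD2]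
      have hIr : Complex.I ^ r * Complex.I ^ ((4 - r) % 4) = 1 := by
        interval_cases r <;> norm_num [pow_succ, Complex.I_mul_I]
      refine ⟨H * D, c * Complex.I ^ r, (4 - r) % 4, ?_, ?_, ?_, ?_, ?_⟩
      · rw [Matrix.transpose_mul, Matrix.mul_assoc, ← Matrix.mul_assoc H.transpose, hH,
          Matrix.one_mul, hDD]
      · rw [Matrix.det_mul, hdet, hDdet]; ring
      · exact mul_ne_zero hc (pow_ne_zero _ Complex.I_ne_zero)
      · omega
      · intro k hk
        rw [hu, hv, hf k hk]
        linear_combination (-(c * (H.mulVec ![1, alpha] 0 ^ (n - k) *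
          H.mulVec ![1, alpha] 1 ^ k))) * hIr
    · exact ⟨H, c, r, hH, hdet, hc, hr, hf⟩
  · rintro ⟨H, c, r, hH, _, hc, hr, hf⟩
    exact ⟨H, c, r, hH, hc, hr, hf⟩
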